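/- arXiv:math/0206252 — 3 statements merged into one kernel-verified Lean document; each statement's English description precedes it below -/
import Mathlib

section
/- Let 1 ≤ i₀ ≤ j₀ ≤ n and let I(i₀,j₀) = { A ∈ T_n : A i j = 0 whenever i₀ ≤ i ≤ j ≤ j₀ } ⊆ T_n, the upper triangular n×n complex matrices. Then I(i₀,j₀) is meet irreducible: if J₁ and J₂ are two-sided ideals of T_n containing I(i₀,j₀) with J₁ ∩ J₂ = I(i₀,j₀), then J₁ = I(i₀,j₀) or J₂ = I(i₀,j₀). -/
open Matrix

/-- The algebra `T_n` of upper triangular `n × n` complex matrices. -/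
def UT (n : ℕ) : Subalgebra ℂ (Matrix (Fin n) (Fin n) ℂ) where
  carrier := {A | ∀ i j : Fin n, j < i → A i j = 0}
  add_mem' := by
    intro a b ha hb i j hij
    simp [Matrix.add_apply, ha i j hij, hb i j hij]
  mul_mem' := by
    intro a b ha hb i j hij
    show ∑ k, a i k * b k j = 0
    apply Finset.sum_eq_zero
    intro k _
    rcases lt_or_ge k i with h | h
    · rw [ha i k h, zero_mul]
    · rw [hb k j (lt_of_lt_of_le hij h), mul_zero]
  algebraMap_mem' := by
    intro r i j hij
    simp [Matrix.algebraMap_matrix_apply, (ne_of_lt hij).symm]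

/-- The "wedge" set `I(i₀, j₀)` of upper triangular matrices vanishing on the
wedge `i₀ ≤ i ≤ j ≤ j₀`. -/
def wedge (n : ℕ) (i₀ j₀ : Fin n) : Set (UT n) :=
  {A | ∀ i j : Fin n, i₀ ≤ i → i ≤ j → j ≤ j₀ → (A : Matrix (Fin n) (Fin n) ℂ) i j = 0}
/-- The wedge ideal `I(i₀, j₀)` as a two-sided ideal of `T_n`. -/
def wedgeIdeal (n : ℕ) (i₀ j₀ : Fin n) : TwoSidedIdeal (UT n) :=
  TwoSidedIdeal.mk' (wedge n i₀ j₀)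
    (by intro i j _ _ _; rfl)
    (by
      intro x y hx hy i j h1 h2 h3
      show (x : Matrix (Fin n) (Fin n) ℂ) i j + (y : Matrix (Fin n) (Fin n) ℂ) i j = 0
      rw [hx i j h1 h2 h3, hy i j h1 h2 h3, add_zero])
    (by
      intro x hx i j h1 h2 h3
      show -(x : Matrix (Fin n) (Fin n) ℂ) i j = 0
      rw [hx i j h1 h2 h3, neg_zero])
    (by
      intro x y hy i j h1 h2 h3
      show ∑ k, (x : Matrix (Fin n) (Fin n) ℂ) i k * (y : Matrix (Fin n) (Fin n) ℂ) k j = 0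
      apply Finset.sum_eq_zero
      intro k _
      rcases lt_or_ge k i with h | h
      · rw [x.2 i k h, zero_mul]
      · rcases le_or_gt k j with h' | h'
        · rw [hy k j (le_trans h1 h) h' h3, mul_zero]
        · rw [y.2 k j h', mul_zero])
    (by
      intro x y hx i j h1 h2 h3
      show ∑ k, (x : Matrix (Fin n) (Fin n) ℂ) i k * (y : Matrix (Fin n) (Fin n) ℂ) k j = 0
      apply Finset.sum_eq_zero
      intro k _
      rcases lt_or_ge k i with h | h
      · rw [x.2 i k h, zero_mul]
      · rcases le_or_gt k j with h' | h'
        · rw [hx i k h1 h (le_trans h' h3), zero_mul]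
        · rw [y.2 k j h', mul_zero])

noncomputable def sbm {n : ℕ} (i j : Fin n) (hij : i ≤ j) (c : ℂ) : UT n :=
  ⟨Matrix.single i j c, by
    intro p q hpq
    apply Matrix.single_apply_of_ne
    rintro ⟨rfl, rfl⟩
    exact absurd hij (not_le.mpr hpq)⟩

lemma sbm_mul_mul {n : ℕ} (i' i j j' : Fin n) (c d : ℂ) (M : Matrix (Fin n) (Fin n) ℂ) :
    Matrix.single i' i c * M * Matrix.single j j' d
      = Matrix.single i' j' (c * M i j * d) := by
  ext p q
  rcases eq_or_ne p i' with rfl | hp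
  · rcases eq_or_ne q j' with rfl | hq
    · simp [mul_assoc]
    · simp [hq, Ne.symm hq]
  · simp [Matrix.mul_apply, hp, Ne.symm hp]

lemma stdBasis_mem {n : ℕ} (i₀ j₀ : Fin n) (J : TwoSidedIdeal (UT n)) (A : UT n)
    (hA : A ∈ J) (i j : Fin n) (h1 : i₀ ≤ i) (h2 : i ≤ j) (h3 : j ≤ j₀)
    (hne : (A : Matrix (Fin n) (Fin n) ℂ) i j ≠ 0) :
    sbm i₀ j₀ (le_trans h1 (le_trans h2 h3)) 1 ∈ J := by
  have hmem : sbm i₀ i h1 (((A : Matrix (Fin n) (Fin n) ℂ) i j)⁻¹) * A * sbm j j₀ h3 1 ∈ J :=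
    J.mul_mem_right _ _ (J.mul_mem_left _ _ hA)
  convert hmem using 1
  apply Subtype.ext
  show Matrix.single i₀ j₀ (1 : ℂ)
      = Matrix.single i₀ i (((A : Matrix (Fin n) (Fin n) ℂ) i j)⁻¹)
          * (A : Matrix (Fin n) (Fin n) ℂ) * Matrix.single j j₀ 1
  rw [sbm_mul_mul, inv_mul_cancel₀ hne, mul_one]

/-- the wedge ideal `I(i₀,j₀)` is meet irreducible in `T_n`. -/
theorem wedgeIdeal_meetIrreducible (n : ℕ) (i₀ j₀ : Fin n) (h : i₀ ≤ j₀)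
    (J₁ J₂ : TwoSidedIdeal (UT n))
    (h₁ : wedgeIdeal n i₀ j₀ ≤ J₁) (h₂ : wedgeIdeal n i₀ j₀ ≤ J₂)
    (hmeet : J₁ ⊓ J₂ = wedgeIdeal n i₀ j₀) :
    J₁ = wedgeIdeal n i₀ j₀ ∨ J₂ = wedgeIdeal n i₀ j₀ := by
  by_contra hcon
  push_neg at hcon
  obtain ⟨hJ1, hJ2⟩ := hcon
  have key : ∀ J : TwoSidedIdeal (UT n), wedgeIdeal n i₀ j₀ ≤ J → J ≠ wedgeIdeal n i₀ j₀ →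
      sbm i₀ j₀ h 1 ∈ J := by
    intro J hle hne
    have hnle : ¬ (J ≤ wedgeIdeal n i₀ j₀) := fun hle' => hne (le_antisymm hle' hle)
    obtain ⟨A, hAJ, hAnot⟩ := SetLike.not_le_iff_exists.mp hnle
    replace hAnot : A ∉ wedge n i₀ j₀ := fun h' => hAnot ((TwoSidedIdeal.mem_mk' _ _ _ _ _ _ A).2 h')
    simp only [wedge, Set.mem_setOf_eq, not_forall] at hAnot
    obtain ⟨i, j, hi1, hi2, hi3, hne'⟩ := hAnot
    exact stdBasis_mem i₀ j₀ J A hAJ i j hi1 hi2 hi3 hne'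
  have hmem : sbm i₀ j₀ h 1 ∈ wedgeIdeal n i₀ j₀ := by
    rw [← hmeet]
    exact (TwoSidedIdeal.mem_inf _).mpr ⟨key J₁ h₁ hJ1, key J₂ h₂ hJ2⟩
  replace hmem : sbm i₀ j₀ h 1 ∈ wedge n i₀ j₀ := (TwoSidedIdeal.mem_mk' _ _ _ _ _ _ _).1 hmem
  have := hmem i₀ j₀ le_rfl h le_rfl
  simp [sbm] at this
end

section
/- Every two-sided ideal of T_n, the algebra of upper triangular n×n complex matrices, is an intersection of ideals of the form I(i₀,j₀) = { A ∈ T_n : A i j = 0 whenever i₀ ≤ i ≤ j ≤ j₀ } for various pairs 1 ≤ i₀ ≤ j₀ ≤ n (with the empty intersection interpreted as T_n itself). -/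
open Matrix

section Aux

variable {n : ℕ}

lemma ut_stdBasis (i j : Fin n) (h : i ≤ j) :
    Matrix.single i j (1 : ℂ) ∈ UT n := by
  intro k l hkl
  rw [Matrix.single]
  simp only [of_apply, ite_eq_right_iff, and_imp]
  rintro rfl rfl
  exact absurd h hkl.not_ge

/-- The matrix unit `E i j` as an element of `UT n`. -/
def Eu (i j : Fin n) (h : i ≤ j) : UT n :=
  ⟨Matrix.single i j 1, ut_stdBasis i j h⟩

lemma sandwich (M : Matrix (Fin n) (Fin n) ℂ) (i₀ i j j₀ : Fin n) :
    Matrix.single i₀ i (1 : ℂ) * M * Matrix.single j j₀ 1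
      = M i j • Matrix.single i₀ j₀ 1 := by
  ext a b
  rcases eq_or_ne b j₀ with rfl | hb
  · rw [Matrix.mul_single_apply_same, mul_one]
    rcases eq_or_ne a i₀ with rfl | ha
    · rw [Matrix.single_mul_apply_same, one_mul, Matrix.smul_apply,
        Matrix.single_apply_same, smul_eq_mul, mul_one]
    · rw [Matrix.single_mul_apply_of_ne _ _ _ _ _ ha, Matrix.smul_apply,
        Matrix.single_apply_of_ne _ _ _ _ _ (fun hc => ha hc.1.symm), smul_zero]
  · rw [Matrix.mul_single_apply_of_ne _ _ _ _ _ hb, Matrix.smul_apply,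
      Matrix.single_apply_of_ne _ _ _ _ _ (fun hc => hb hc.2.symm), smul_zero]

lemma sandwich_mem (I : TwoSidedIdeal (UT n)) {A : UT n} (hA : A ∈ I)
    {i₀ i j j₀ : Fin n} (h1 : i₀ ≤ i) (h3 : j ≤ j₀) :
    Eu i₀ i h1 * A * Eu j j₀ h3 ∈ I :=
  I.mul_mem_right _ _ (I.mul_mem_left _ _ hA)

lemma sandwich_val (A : UT n) {i₀ i j j₀ : Fin n} (h1 : i₀ ≤ i) (h3 : j ≤ j₀) :
    ((Eu i₀ i h1 * A * Eu j j₀ h3 : UT n) : Matrix (Fin n) (Fin n) ℂ)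
      = (A : Matrix (Fin n) (Fin n) ℂ) i j • Matrix.single i₀ j₀ 1 := by
  show (Matrix.single i₀ i (1 : ℂ)) * (A : Matrix (Fin n) (Fin n) ℂ) * Matrix.single j j₀ 1 = _
  exact sandwich _ _ _ _ _

lemma mem_iInf_prop {R : Type*} [NonUnitalNonAssocRing R] {q : Prop}
    {F : q → TwoSidedIdeal R} {x : R} :
    x ∈ (⨅ h : q, F h) ↔ ∀ h : q, x ∈ F h := by
  by_cases h : q
  · rw [iInf_pos h]
    exact ⟨fun hx _ => hx, fun hx => hx h⟩
  · rw [iInf_neg h]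
    simp [h]

lemma mem_biInf {R : Type*} [NonUnitalNonAssocRing R] {ι : Type*} {S : Set ι}
    {F : ι → TwoSidedIdeal R} {x : R} :
    x ∈ (⨅ p ∈ S, F p) ↔ ∀ p ∈ S, x ∈ F p := by
  simp [TwoSidedIdeal.mem_iInf, mem_iInf_prop]

lemma mem_wedgeIdeal {i₀ j₀ : Fin n} {A : UT n} :
    A ∈ wedgeIdeal n i₀ j₀ ↔ A ∈ wedge n i₀ j₀ :=
  TwoSidedIdeal.mem_mk' _ _ _ _ _ _ _

end Aux

set_option maxHeartbeats 1000000 in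
set_option synthInstance.maxHeartbeats 1000000 in
/-- every two-sided ideal of `T_n` is an intersection of wedge ideals
`I(i₀,j₀)` (the empty intersection being all of `T_n`, i.e. `⊤`). -/
theorem ideal_eq_iInf_wedgeIdeals (n : ℕ) (I : TwoSidedIdeal (UT n)) :
    ∃ S : Set (Fin n × Fin n), (∀ p ∈ S, p.1 ≤ p.2) ∧
      I = ⨅ p ∈ S, wedgeIdeal n p.1 p.2 := by
  classical
  set S : Set (Fin n × Fin n) :=
    {p | p.1 ≤ p.2 ∧ ∀ B ∈ I, (B : Matrix (Fin n) (Fin n) ℂ) p.1 p.2 = 0} with hS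
  refine ⟨S, fun p hp => hp.1, le_antisymm ?_ ?_⟩
  · intro A hA
    refine mem_biInf.2 fun p hp => mem_wedgeIdeal.2 ?_
    intro i j h1 h2 h3
    have hB := sandwich_mem I hA h1 h3
    have := hp.2 _ hB
    rw [sandwich_val A h1 h3] at this
    simpa [Matrix.single] using this
  · intro A hA
    have hA' : ∀ p ∈ S, ∀ i j : Fin n, p.1 ≤ i → i ≤ j → j ≤ p.2 →
        (A : Matrix (Fin n) (Fin n) ℂ) i j = 0 := by
      intro p hp
      exact mem_wedgeIdeal.1 (mem_biInf.1 hA p hp)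
    set f : Fin n × Fin n → UT n := fun p =>
      if h : p.1 ≤ p.2 then
        (A : Matrix (Fin n) (Fin n) ℂ) p.1 p.2 • Eu p.1 p.2 h else 0 with hf
    have key : A = ∑ p : Fin n × Fin n, f p := by
      apply Subtype.ext
      have hcoe : ((∑ p : Fin n × Fin n, f p : UT n) : Matrix (Fin n) (Fin n) ℂ)
          = ∑ p : Fin n × Fin n, ((f p : UT n) : Matrix (Fin n) (Fin n) ℂ) := by
        exact AddSubmonoidClass.coe_finset_sum _ _
      rw [hcoe]
      ext k l
      rw [Matrix.sum_apply]
      rw [Finset.sum_eq_single (k, l)]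
      · by_cases h : k ≤ l
        · simp [hf, h, Eu, Matrix.single]
        · simp [hf, h, A.2 k l (not_le.1 h)]
      · intro p _ hp
        by_cases h : p.1 ≤ p.2
        · simp only [hf, dif_pos h, SetLike.val_smul, Matrix.smul_apply, Eu]
          rw [Matrix.single]
          simp only [of_apply, smul_eq_mul, mul_ite, mul_one, mul_zero,
            ite_eq_right_iff, and_imp]
          intro h1 h2
          exact absurd (Prod.ext h1 h2) hp
        · simp [hf, h]
      · simp
    rw [key]
    apply sum_mem
    intro p _
    by_cases h : p.1 ≤ p.2
    · simp only [hf, dif_pos h]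
      by_cases hmem : ∀ B ∈ I, (B : Matrix (Fin n) (Fin n) ℂ) p.1 p.2 = 0
      · rw [hA' p ⟨h, hmem⟩ p.1 p.2 le_rfl h le_rfl, zero_smul]
        exact I.zero_mem
      · push_neg at hmem
        obtain ⟨B, hB, hBne⟩ := hmem
        have hsand := sandwich_mem I hB (le_refl p.1) (le_refl p.2)
        have heq : (A : Matrix (Fin n) (Fin n) ℂ) p.1 p.2 • Eu p.1 p.2 h
            = ((A : Matrix (Fin n) (Fin n) ℂ) p.1 p.2
                * ((B : Matrix (Fin n) (Fin n) ℂ) p.1 p.2)⁻¹)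
              • (Eu p.1 p.1 le_rfl * B * Eu p.2 p.2 le_rfl) := by
          apply Subtype.ext
          rw [SetLike.val_smul, SetLike.val_smul, sandwich_val B le_rfl le_rfl,
            smul_smul, mul_assoc, inv_mul_cancel₀ hBne, mul_one]
          rfl
        rw [heq, Algebra.smul_def]
        exact I.mul_mem_left _ _ hsand
    · simp only [hf, dif_neg h]
      exact I.zero_mem
end

section
/- Let P be an orthogonal projection on ℂⁿ and T ⊆ M_n(ℂ) a subalgebra. Then P is semi-invariant for T (i.e., PaPbP = PabP for all a,b ∈ T) if and only if P = Q - Q' where Q, Q' are orthogonal projections with Q' ≤ Q and both range Q and range Q' are invariant subspaces for T. -/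
open Matrix

set_option maxHeartbeats 1000000
set_option synthInstance.maxHeartbeats 200000

/-- Sarason: an orthogonal projection `P` is semi-invariant for a
subalgebra `T ⊆ M_n(ℂ)` iff `P = Q - Q'` for orthogonal projections `Q' ≤ Q` whose
ranges are invariant for `T` (invariance of the range of a projection `Q` being
expressed by `QtQ = tQ` for all `t ∈ T`). -/
theorem semiInvariant_iff_diff_of_invariant_projections (n : ℕ)
    (P : Matrix (Fin n) (Fin n) ℂ) (hsa : Pᴴ = P) (hidem : P * P = P)
    (T : Subalgebra ℂ (Matrix (Fin n) (Fin n) ℂ)) :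
    (∀ a b : T,
        P * (a : Matrix (Fin n) (Fin n) ℂ) * P * (b : Matrix (Fin n) (Fin n) ℂ) * P =
        P * (a : Matrix (Fin n) (Fin n) ℂ) * (b : Matrix (Fin n) (Fin n) ℂ) * P) ↔
      ∃ Q Q' : Matrix (Fin n) (Fin n) ℂ,
        Qᴴ = Q ∧ Q * Q = Q ∧ Q'ᴴ = Q' ∧ Q' * Q' = Q' ∧
        Q' * Q = Q' ∧ Q * Q' = Q' ∧
        P = Q - Q' ∧
        (∀ t : T, Q * (t : Matrix (Fin n) (Fin n) ℂ) * Q = (t : Matrix (Fin n) (Fin n) ℂ) * Q) ∧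
        (∀ t : T, Q' * (t : Matrix (Fin n) (Fin n) ℂ) * Q' = (t : Matrix (Fin n) (Fin n) ℂ) * Q') := by
  constructor
  · intro H
    classical
    let φ := Matrix.toEuclideanCLM (n := Fin n) (𝕜 := ℂ)
    let p : EuclideanSpace ℂ (Fin n) →L[ℂ] EuclideanSpace ℂ (Fin n) := φ P
    let M : Submodule ℂ (EuclideanSpace ℂ (Fin n)) :=
      ⨆ t : T, LinearMap.range
        ((φ ((t : Matrix (Fin n) (Fin n) ℂ) * P) :
          EuclideanSpace ℂ (Fin n) →L[ℂ] EuclideanSpace ℂ (Fin n)) :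
          EuclideanSpace ℂ (Fin n) →ₗ[ℂ] EuclideanSpace ℂ (Fin n))
    let q : EuclideanSpace ℂ (Fin n) →L[ℂ] EuclideanSpace ℂ (Fin n) :=
      M.subtypeL ∘L Submodule.orthogonalProjectionOnto M
    have hgen : ∀ (t : T) (z : EuclideanSpace ℂ (Fin n)),
        φ ((t : Matrix (Fin n) (Fin n) ℂ) * P) z ∈ M := by
      intro t z
      exact le_iSup (fun t : T => LinearMap.range
        ((φ ((t : Matrix (Fin n) (Fin n) ℂ) * P) :
          EuclideanSpace ℂ (Fin n) →L[ℂ] EuclideanSpace ℂ (Fin n)) :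
          EuclideanSpace ℂ (Fin n) →ₗ[ℂ] EuclideanSpace ℂ (Fin n))) t
        (LinearMap.mem_range_self _ z)
    have hq_apply : ∀ x, q x = (Submodule.orthogonalProjectionOnto M x : EuclideanSpace ℂ (Fin n)) :=
      fun _ => rfl
    have hqfix : ∀ x ∈ M, q x = x := by
      intro x hx
      rw [hq_apply]
      exact Submodule.starProjection_eq_self_iff.mpr hx
    have hqmem : ∀ x, q x ∈ M := by
      intro x
      rw [hq_apply]
      exact (Submodule.orthogonalProjectionOnto M x).2
    have hq_idem : q * q = q := by
      refine ContinuousLinearMap.ext fun x => ?_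
      rw [ContinuousLinearMap.mul_apply]
      exact hqfix _ (hqmem x)
    have hq_sa : star q = q := isSelfAdjoint_starProjection M
    have hp_sa : star p = p := by
      show star (φ P) = φ P
      rw [← map_star φ P, Matrix.star_eq_conjTranspose, hsa]
    -- q p = p
    have hqp : q * p = p := by
      refine ContinuousLinearMap.ext fun x => ?_
      rw [ContinuousLinearMap.mul_apply]
      refine hqfix _ ?_
      have := hgen 1 x
      simpa using this
    have hpq : p * q = p := by
      have := congrArg star hqp
      rwa [StarMul.star_mul, hp_sa, hq_sa] at this
    -- M is killed by p ∘ t ∘ (1 - p)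
    have hDq : ∀ t : T,
        (φ (P * (t : Matrix (Fin n) (Fin n) ℂ) - P * (t : Matrix (Fin n) (Fin n) ℂ) * P)) * q
          = 0 := by
      intro t
      have hker : M ≤ LinearMap.ker
          ((φ (P * (t : Matrix (Fin n) (Fin n) ℂ) - P * (t : Matrix (Fin n) (Fin n) ℂ) * P) :
            EuclideanSpace ℂ (Fin n) →L[ℂ] EuclideanSpace ℂ (Fin n)) :
            EuclideanSpace ℂ (Fin n) →ₗ[ℂ] EuclideanSpace ℂ (Fin n)) := by
        refine iSup_le fun s => ?_
        rintro x ⟨z, rfl⟩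
        have hm : (P * (t : Matrix (Fin n) (Fin n) ℂ)
              - P * (t : Matrix (Fin n) (Fin n) ℂ) * P) * ((s : Matrix (Fin n) (Fin n) ℂ) * P)
            = 0 := by
          have h := H t s
          have expand : (P * (t : Matrix (Fin n) (Fin n) ℂ)
                - P * (t : Matrix (Fin n) (Fin n) ℂ) * P) * ((s : Matrix (Fin n) (Fin n) ℂ) * P)
              = P * (t : Matrix (Fin n) (Fin n) ℂ) * (s : Matrix (Fin n) (Fin n) ℂ) * P
                - P * (t : Matrix (Fin n) (Fin n) ℂ) * P * (s : Matrix (Fin n) (Fin n) ℂ) * P := by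
            noncomm_ring
          rw [expand, h, sub_self]
        show (φ _) ((φ _) z) = 0
        rw [← ContinuousLinearMap.mul_apply, ← _root_.map_mul, hm, _root_.map_zero]
        rfl
      refine ContinuousLinearMap.ext fun x => ?_
      rw [ContinuousLinearMap.mul_apply, ContinuousLinearMap.zero_apply]
      exact hker (hqmem x)
    -- key fact A: p t q = p t p
    have hA : ∀ t : T, p * φ (t : Matrix (Fin n) (Fin n) ℂ) * q
        = p * φ (t : Matrix (Fin n) (Fin n) ℂ) * p := by
      intro t
      have h0 := hDq t
      have hφ : φ (P * (t : Matrix (Fin n) (Fin n) ℂ) - P * (t : Matrix (Fin n) (Fin n) ℂ) * P)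
          = p * φ (t : Matrix (Fin n) (Fin n) ℂ)
            - p * φ (t : Matrix (Fin n) (Fin n) ℂ) * p := by
        rw [_root_.map_sub, _root_.map_mul, _root_.map_mul, _root_.map_mul]
      rw [hφ, sub_mul, sub_eq_zero] at h0
      rw [h0, mul_assoc, hpq]
    -- M is invariant under T
    have hMinv : ∀ (t : T) (x : EuclideanSpace ℂ (Fin n)), x ∈ M →
        φ (t : Matrix (Fin n) (Fin n) ℂ) x ∈ M := by
      intro t x hx
      have hmap : Submodule.map
          ((φ (t : Matrix (Fin n) (Fin n) ℂ) :
            EuclideanSpace ℂ (Fin n) →L[ℂ] EuclideanSpace ℂ (Fin n)) :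
            EuclideanSpace ℂ (Fin n) →ₗ[ℂ] EuclideanSpace ℂ (Fin n)) M ≤ M := by
        rw [Submodule.map_iSup]
        refine iSup_le fun s => ?_
        rw [← LinearMap.range_comp]
        have hco : ((φ (t : Matrix (Fin n) (Fin n) ℂ) :
              EuclideanSpace ℂ (Fin n) →L[ℂ] EuclideanSpace ℂ (Fin n)) :
              EuclideanSpace ℂ (Fin n) →ₗ[ℂ] EuclideanSpace ℂ (Fin n)) ∘ₗ
            ((φ ((s : Matrix (Fin n) (Fin n) ℂ) * P) :
              EuclideanSpace ℂ (Fin n) →L[ℂ] EuclideanSpace ℂ (Fin n)) :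
              EuclideanSpace ℂ (Fin n) →ₗ[ℂ] EuclideanSpace ℂ (Fin n))
            = ((φ (((t * s : T) : Matrix (Fin n) (Fin n) ℂ) * P) :
              EuclideanSpace ℂ (Fin n) →L[ℂ] EuclideanSpace ℂ (Fin n)) :
              EuclideanSpace ℂ (Fin n) →ₗ[ℂ] EuclideanSpace ℂ (Fin n)) := by
          have : ((t * s : T) : Matrix (Fin n) (Fin n) ℂ) * P
              = (t : Matrix (Fin n) (Fin n) ℂ) * ((s : Matrix (Fin n) (Fin n) ℂ) * P) := by
            push_cast
            rw [mul_assoc]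
          refine LinearMap.ext fun z => ?_
          simp only [LinearMap.coe_comp, Function.comp_apply, ContinuousLinearMap.coe_coe,
            this, _root_.map_mul, ContinuousLinearMap.mul_apply]
        rw [hco]
        exact le_iSup (fun t : T => LinearMap.range
          ((φ ((t : Matrix (Fin n) (Fin n) ℂ) * P) :
            EuclideanSpace ℂ (Fin n) →L[ℂ] EuclideanSpace ℂ (Fin n)) :
            EuclideanSpace ℂ (Fin n) →ₗ[ℂ] EuclideanSpace ℂ (Fin n))) (t * s)
      exact hmap ⟨x, hx, rfl⟩
    -- q t q = t q
    have hinv : ∀ t : T, q * φ (t : Matrix (Fin n) (Fin n) ℂ) * q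
        = φ (t : Matrix (Fin n) (Fin n) ℂ) * q := by
      intro t
      refine ContinuousLinearMap.ext fun x => ?_
      rw [ContinuousLinearMap.mul_apply, ContinuousLinearMap.mul_apply,
        ContinuousLinearMap.mul_apply]
      exact hqfix _ (hMinv t _ (hqmem x))
    -- now back to matrices
    set Q : Matrix (Fin n) (Fin n) ℂ := φ.symm q with hQdef
    have hφQ : φ Q = q := φ.apply_symm_apply q
    have hsymm_mul : ∀ A B : EuclideanSpace ℂ (Fin n) →L[ℂ] EuclideanSpace ℂ (Fin n),
        φ.symm (A * B) = φ.symm A * φ.symm B := fun A B => _root_.map_mul φ.symm A B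
    have hPs : φ.symm p = P := φ.symm_apply_apply P
    have hts : ∀ t : T, φ.symm (φ (t : Matrix (Fin n) (Fin n) ℂ))
        = (t : Matrix (Fin n) (Fin n) ℂ) := fun t => φ.symm_apply_apply _
    have hQsa : Qᴴ = Q := by
      rw [← Matrix.star_eq_conjTranspose, hQdef, ← map_star φ.symm q, hq_sa]
    have hQQ : Q * Q = Q := by
      rw [hQdef, ← hsymm_mul, hq_idem]
    have hQP : Q * P = P := by
      rw [hQdef, ← hPs, ← hsymm_mul, hqp]
    have hPQ : P * Q = P := by
      rw [hQdef, ← hPs, ← hsymm_mul, hpq]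
    have hQtQ : ∀ t : T, Q * (t : Matrix (Fin n) (Fin n) ℂ) * Q
        = (t : Matrix (Fin n) (Fin n) ℂ) * Q := by
      intro t
      have h := congrArg φ.symm (hinv t)
      simp only [hsymm_mul, hts, ← hQdef] at h
      exact h
    have hPtQ : ∀ t : T, P * (t : Matrix (Fin n) (Fin n) ℂ) * Q
        = P * (t : Matrix (Fin n) (Fin n) ℂ) * P := by
      intro t
      have h := congrArg φ.symm (hA t)
      simp only [hsymm_mul, hts, hPs, ← hQdef] at h
      exact h
    have hQtP : ∀ t : T, Q * (t : Matrix (Fin n) (Fin n) ℂ) * P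
        = (t : Matrix (Fin n) (Fin n) ℂ) * P := by
      intro t
      calc Q * (t : Matrix (Fin n) (Fin n) ℂ) * P
          = Q * (t : Matrix (Fin n) (Fin n) ℂ) * (Q * P) := by rw [hQP]
        _ = Q * (t : Matrix (Fin n) (Fin n) ℂ) * Q * P := (mul_assoc _ _ _).symm
        _ = (t : Matrix (Fin n) (Fin n) ℂ) * Q * P := by rw [hQtQ t]
        _ = (t : Matrix (Fin n) (Fin n) ℂ) * (Q * P) := mul_assoc _ _ _
        _ = (t : Matrix (Fin n) (Fin n) ℂ) * P := by rw [hQP]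
    refine ⟨Q, Q - P, hQsa, hQQ, ?_, ?_, ?_, ?_, by abel, hQtQ, ?_⟩
    · rw [Matrix.conjTranspose_sub, hQsa, hsa]
    · have : (Q - P) * (Q - P) = Q * Q - Q * P - P * Q + P * P := by noncomm_ring
      rw [this, hQQ, hQP, hPQ, hidem]
      abel
    · have : (Q - P) * Q = Q * Q - P * Q := by noncomm_ring
      rw [this, hQQ, hPQ]
    · have : Q * (Q - P) = Q * Q - Q * P := by noncomm_ring
      rw [this, hQQ, hQP]
    · intro t
      have expand : (Q - P) * (t : Matrix (Fin n) (Fin n) ℂ) * (Q - P)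
          = Q * (t : Matrix (Fin n) (Fin n) ℂ) * Q - Q * (t : Matrix (Fin n) (Fin n) ℂ) * P
            - P * (t : Matrix (Fin n) (Fin n) ℂ) * Q
            + P * (t : Matrix (Fin n) (Fin n) ℂ) * P := by noncomm_ring
      rw [expand, hQtQ t, hQtP t, hPtQ t]
      noncomm_ring
  · rintro ⟨Q, Q', hQsa, hQQ, hQ'sa, hQ'Q', hQ'Q, hQQ', hPdef, hQinv, hQ'inv⟩
    intro a b
    have hbP : Q * ((b : Matrix (Fin n) (Fin n) ℂ) * P)
        = (b : Matrix (Fin n) (Fin n) ℂ) * P := by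
      have h1 : Q * ((b : Matrix (Fin n) (Fin n) ℂ) * Q)
          = (b : Matrix (Fin n) (Fin n) ℂ) * Q := by
        rw [← mul_assoc]; exact hQinv b
      have h2 : Q * ((b : Matrix (Fin n) (Fin n) ℂ) * Q')
          = (b : Matrix (Fin n) (Fin n) ℂ) * Q' := by
        conv_lhs => rw [← hQ'inv b]
        rw [← mul_assoc, ← mul_assoc, hQQ']
        exact hQ'inv b
      rw [hPdef, mul_sub, mul_sub, h1, h2]
    have haQ' : P * ((a : Matrix (Fin n) (Fin n) ℂ) * Q') = 0 := by
      have hPQ' : P * Q' = 0 := by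
        rw [hPdef, sub_mul, hQQ', hQ'Q', sub_self]
      conv_lhs => rw [← hQ'inv a]
      rw [← mul_assoc, ← mul_assoc, hPQ', zero_mul, zero_mul]
    calc P * (a : Matrix (Fin n) (Fin n) ℂ) * P * (b : Matrix (Fin n) (Fin n) ℂ) * P
        = P * (a : Matrix (Fin n) (Fin n) ℂ) * (Q - Q') * (b : Matrix (Fin n) (Fin n) ℂ) * P := by
          rw [← hPdef]
      _ = P * ((a : Matrix (Fin n) (Fin n) ℂ) * (Q * ((b : Matrix (Fin n) (Fin n) ℂ) * P)))
            - (P * ((a : Matrix (Fin n) (Fin n) ℂ) * Q')) * ((b : Matrix (Fin n) (Fin n) ℂ) * P) := by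
          noncomm_ring
      _ = P * ((a : Matrix (Fin n) (Fin n) ℂ) * ((b : Matrix (Fin n) (Fin n) ℂ) * P)) := by
          rw [hbP, haQ', zero_mul, sub_zero]
      _ = P * (a : Matrix (Fin n) (Fin n) ℂ) * (b : Matrix (Fin n) (Fin n) ℂ) * P := by
          noncomm_ring
end
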